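/- Let G ∈ ℝ^{M×M} be invertible, let Λ = {Gᵀz : z ∈ ℤ^M} be the full-rank lattice generated by the columns of Gᵀ, and let s_1,…,s_M ∈ Λ be linearly independent vectors that are Korkin–Zolotarev reduced: for every i = 1,…,M, (i) P_i(s_i) is a shortest nonzero vector in P_i(Λ) — for every v ∈ Λ with P_i(v) ≠ 0, ‖P_i(s_i)‖ ≤ ‖P_i(v)‖ — and (ii) |s_jᵀ·s_i*| / ‖s_i*‖² ≤ 1/2 for all j > i, where P_i denotes orthogonal projection onto the orthogonal complement of span(s_1,…,s_{i−1}) and s_i* = P_i(s_i). Then s_1,…,s_M form a basis of Λ: every element of Λ is an integer linear combination of s_1,…,s_M. -/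

import Mathlib

open RealInnerProductSpace

/-- View a plain vector in `Fin M → ℝ` as an element of Euclidean space. -/
noncomputable def toE {M : ℕ} (v : Fin M → ℝ) : EuclideanSpace ℝ (Fin M) :=
  (EuclideanSpace.equiv (Fin M) ℝ).symm v

/-- `projPerp s i x` is the orthogonal projection of `x` onto the orthogonal complement of
`span(s_1, …, s_{i-1})`. -/
noncomputable def projPerp {M : ℕ} (s : Fin M → EuclideanSpace ℝ (Fin M)) (i : Fin M)
    (x : EuclideanSpace ℝ (Fin M)) : EuclideanSpace ℝ (Fin M) :=
  (Submodule.orthogonalProjectionOnto (Submodule.span ℝ (s '' {j | j < i}))ᗮ x : EuclideanSpace ℝ (Fin M))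

theorem kz_reduced_set_is_lattice_basis {M : ℕ}
    (G : Matrix (Fin M) (Fin M) ℝ) (hG : IsUnit G.det)
    -- the full-rank lattice generated by the columns of Gᵀ
    (Λ : Set (EuclideanSpace ℝ (Fin M)))
    (hΛ : Λ = {v | ∃ z : Fin M → ℤ, v = toE ((G.transpose).mulVec (fun t => (z t : ℝ)))})
    -- linearly independent lattice vectors s_1, …, s_M
    (s : Fin M → EuclideanSpace ℝ (Fin M))
    (hsΛ : ∀ i, s i ∈ Λ)
    (hli : LinearIndependent ℝ s)
    -- KZ condition (i): P_i(s_i) is a shortest nonzero vector of P_i(Λ)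
    (hKZ1 : ∀ (i : Fin M), ∀ v ∈ Λ, projPerp s i v ≠ 0 →
      ‖projPerp s i (s i)‖ ≤ ‖projPerp s i v‖)
    -- KZ condition (ii): the Gram–Schmidt coefficients are at most 1/2 in magnitude
    (hKZ2 : ∀ i j : Fin M, i < j →
      |⟪s j, projPerp s i (s i)⟫| / ‖projPerp s i (s i)‖^2 ≤ 1/2) :
    -- then s_1, …, s_M is a basis of Λ
    ∀ v ∈ Λ, ∃ c : Fin M → ℤ, v = ∑ k : Fin M, c k • s k := by
  classical
  intro v hv
  rcases Nat.eq_zero_or_pos M with hM0 | hMpos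
  · refine ⟨0, ?_⟩
    subst hM0
    ext t
    exact t.elim0
  haveI : Nonempty (Fin M) := ⟨⟨0, hMpos⟩⟩
  -- Λ is closed under subtracting an integer multiple of a lattice vector
  have hstep : ∀ a ∈ Λ, ∀ (k : Fin M) (z : ℤ), a - (z : ℝ) • s k ∈ Λ := by
    intro a ha k z
    have hsk := hsΛ k
    rw [hΛ] at ha hsk ⊢
    obtain ⟨za, rfl⟩ := ha
    obtain ⟨zk, hk⟩ := hsk
    refine ⟨fun t => za t - z * zk t, ?_⟩
    have hfun : (fun t => ((za t - z * zk t : ℤ) : ℝ)) =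
        (fun t => (za t : ℝ)) - (z : ℝ) • (fun t => (zk t : ℝ)) := by
      funext t; push_cast; simp [mul_comm]
    rw [hk, hfun, Matrix.mulVec_sub, Matrix.mulVec_smul]
    simp [toE, map_sub, map_smul]
  -- closure under subtracting finite integer combinations
  have hclosed : ∀ a ∈ Λ, ∀ (T : Finset (Fin M)) (z : Fin M → ℤ),
      a - ∑ j ∈ T, (z j : ℝ) • s j ∈ Λ := by
    intro a ha T z
    induction T using Finset.induction_on with
    | empty => simpa using ha
    | @insert k T hk ih =>
      rw [Finset.sum_insert hk, sub_add_eq_sub_sub_swap]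
      exact hstep _ ih k (z k)
  -- express v in the basis s
  have hcard : Fintype.card (Fin M) = Module.finrank ℝ (EuclideanSpace ℝ (Fin M)) := by simp
  set B := basisOfLinearIndependentOfCardEqFinrank hli hcard with hB
  set c : Fin M → ℝ := fun k => B.repr v k with hc
  have hBk : ∀ k, B k = s k := fun k => by
    rw [hB, coe_basisOfLinearIndependentOfCardEqFinrank]
  have hv' : v = ∑ k, c k • s k := by
    conv_lhs => rw [← B.sum_repr v]
    exact Finset.sum_congr rfl fun k _ => by rw [hBk k]
  -- main claim: all coefficients are integers
  have main : ∀ i : Fin M, ∃ m : ℤ, c i = m := by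
    have wf : WellFounded ((· > ·) : Fin M → Fin M → Prop) := wellFounded_gt
    intro i
    refine wf.induction (C := fun i => ∃ m : ℤ, c i = m) i ?_
    clear i; intro i IH
    set K := (Submodule.span ℝ (s '' {j | j < i}))ᗮ with hK
    set L : EuclideanSpace ℝ (Fin M) →ₗ[ℝ] EuclideanSpace ℝ (Fin M) :=
      K.subtype ∘ₗ (Submodule.orthogonalProjectionOnto K).toLinearMap with hL
    have hproj : ∀ x, projPerp s i x = L x := fun x => rfl
    have hzero : ∀ j, j < i → L (s j) = 0 := by
      intro j hj
      have hmem : s j ∈ Submodule.span ℝ (s '' {j | j < i}) :=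
        Submodule.subset_span ⟨j, hj, rfl⟩
      have hmem' : s j ∈ Kᗮ := Submodule.le_orthogonal_orthogonal _ hmem
      simp [hL, Submodule.orthogonalProjectionOnto_apply_of_mem_orthogonal hmem']
    have hsine : L (s i) ≠ 0 := by
      intro h0
      have h1 : Submodule.orthogonalProjectionOnto K (s i) = 0 := by
        have := h0
        simpa [hL] using Subtype.coe_injective (by simpa [hL] using h0 : ((Submodule.orthogonalProjectionOnto K (s i) : EuclideanSpace ℝ (Fin M))) = ((0 : K) : EuclideanSpace ℝ (Fin M)))
      have h2 : s i ∈ Kᗮ := Submodule.orthogonalProjectionOnto_eq_zero_iff.mp h1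
      rw [hK, Submodule.orthogonal_orthogonal] at h2
      exact hli.notMem_span_image (by simp) h2
    let z : Fin M → ℤ := fun j => if h : i < j then (IH j h).choose else round (c j)
    have hz : ∀ j, i < j → c j = z j := by
      intro j hj; simp only [z, dif_pos hj]; exact (IH j hj).choose_spec
    have hzi : z i = round (c i) := by simp [z]
    set F := Finset.univ.filter (fun j => i ≤ j) with hF
    set w := v - ∑ j ∈ F, (z j : ℝ) • s j with hw
    have hwΛ : w ∈ Λ := hclosed v hv F z
    set d : Fin M → ℝ := fun k => c k - if i ≤ k then (z k : ℝ) else 0 with hd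
    have hw' : w = ∑ k, d k • s k := by
      have h1 : ∑ j ∈ F, (z j : ℝ) • s j
          = ∑ j, (if i ≤ j then (z j : ℝ) else 0) • s j := by
        rw [hF, Finset.sum_filter]
        refine Finset.sum_congr rfl fun j _ => ?_
        split <;> simp
      rw [hw, hv', h1, ← Finset.sum_sub_distrib]
      exact Finset.sum_congr rfl fun k _ => by rw [← sub_smul]
    have hLw : L w = d i • L (s i) := by
      rw [hw', map_sum]
      simp_rw [map_smul]
      refine Finset.sum_eq_single i (fun k _ hk => ?_) (by simp)
      rcases lt_or_gt_of_ne hk with h | h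
      · rw [hzero k h, smul_zero]
      · have hdk : d k = 0 := by
          simp only [hd, if_pos (le_of_lt h), hz k h, sub_self]
        rw [hdk, zero_smul]
    have hdi : |d i| ≤ 1/2 := by
      have : d i = c i - round (c i) := by simp [hd, hzi]
      rw [this]
      exact abs_sub_round (c i)
    have hLw0 : L w = 0 := by
      by_contra h
      have h1 := hKZ1 i w hwΛ (by rw [hproj]; exact h)
      rw [hproj, hproj, hLw, norm_smul, Real.norm_eq_abs] at h1
      have hpos : 0 < ‖L (s i)‖ := norm_pos_iff.mpr hsine
      nlinarith
    have hdi0 : d i = 0 := by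
      rw [hLw] at hLw0
      rcases smul_eq_zero.mp hLw0 with h | h
      · exact h
      · exact absurd h hsine
    refine ⟨round (c i), ?_⟩
    have : c i - (round (c i) : ℝ) = 0 := by
      have := hdi0
      simpa [hd, hzi] using this
    linarith
  choose m hm using main
  refine ⟨m, ?_⟩
  rw [hv']
  refine Finset.sum_congr rfl fun k _ => ?_
  rw [hm k, Int.cast_smul_eq_zsmul]
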